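/- Let n be a positive integer, let w ∈ ℝⁿ have all positive components, and let θ be a positive real number. Let P_{w,θ}ⁿ be the polytope in ℝⁿ determined by the inequalities |xᵢ| ≤ wᵢ for i = 1,…,n and |Σ_{i=1}^n xᵢ| ≤ θ. Setting v := (w₁,…,wₙ,θ) ∈ ℝ^{n+1}, one has vol_n(P_{w,θ}ⁿ) = (1/n!) Σ_{s ∈ V_{n+1}} ε_s (v·s)₊ⁿ. -/

import Mathlib

open MeasureTheory Finset

lemma hasDerivAt_maxpow (k : ℕ) (x : ℝ) :
    HasDerivAt (fun r : ℝ => (max r 0) ^ (k + 2)) ((k + 2) * (max x 0) ^ (k + 1)) x := by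
  rcases lt_trichotomy x 0 with hx | hx | hx
  · have h0 : HasDerivAt (fun _ : ℝ => (0:ℝ)) 0 x := hasDerivAt_const x 0
    have he : (fun r : ℝ => (max r 0) ^ (k + 2)) =ᶠ[nhds x] fun _ => (0:ℝ) := by
      filter_upwards [eventually_lt_nhds hx] with r hr
      rw [max_eq_right hr.le, zero_pow (by omega)]
    have := h0.congr_of_eventuallyEq he
    simpa [max_eq_right hx.le, zero_pow (show k + 1 ≠ 0 by omega)] using this
  · subst hx
    rw [hasDerivAt_iff_tendsto_slope]
    simp only [max_self, zero_pow (show k + 1 ≠ 0 by omega), mul_zero]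
    have hb : ∀ r : ℝ, ‖slope (fun r : ℝ => (max r 0) ^ (k + 2)) 0 r‖ ≤ ‖r‖ ^ (k + 1) := by
      intro r
      rw [slope_def_field]
      rcases le_or_gt r 0 with h | h
      · simp only [max_eq_right h, zero_pow (show k + 2 ≠ 0 by omega), max_eq_right le_rfl,
          sub_zero, zero_sub, zero_div]
        simp
      · rw [max_eq_left h.le, max_eq_right le_rfl, zero_pow (show k + 2 ≠ 0 by omega), sub_zero,
          sub_zero, pow_succ _ (k+1), mul_div_assoc, div_self h.ne', mul_one]
        rw [Real.norm_eq_abs, abs_pow, Real.norm_eq_abs]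
    refine squeeze_zero_norm hb ?_
    have : Filter.Tendsto (fun r : ℝ => ‖r‖ ^ (k + 1)) (nhds 0) (nhds 0) := by
      have := ((continuous_norm.pow (k+1)) : Continuous fun r : ℝ => ‖r‖ ^ (k+1)).tendsto 0
      convert this using 2 <;> simp [Pi.pow_apply]
    exact this.mono_left nhdsWithin_le_nhds
  · have h0 : HasDerivAt (fun r : ℝ => r ^ (k + 2)) ((k + 2) * x ^ (k + 1)) x := by
      simpa using hasDerivAt_pow (k + 2) x
    have he : (fun r : ℝ => (max r 0) ^ (k + 2)) =ᶠ[nhds x] fun r => r ^ (k + 2) := by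
      filter_upwards [eventually_gt_nhds hx] with r hr
      rw [max_eq_left hr.le]
    have := h0.congr_of_eventuallyEq he
    simpa [max_eq_left hx.le] using this

lemma integral_maxpow (k : ℕ) (t a : ℝ) :
    ∫ y in (0:ℝ)..a, (max (t - y) 0) ^ (k + 1)
      = ((max t 0) ^ (k + 2) - (max (t - a) 0) ^ (k + 2)) / (k + 2) := by
  have hcont : Continuous fun y : ℝ => (max (t - y) 0) ^ (k + 1) :=
    ((continuous_const.sub continuous_id).max continuous_const).pow _
  have hder : ∀ y : ℝ, HasDerivAt (fun y : ℝ => -(max (t - y) 0) ^ (k + 2) / (k + 2))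
      ((max (t - y) 0) ^ (k + 1)) y := by
    intro y
    have h1 : HasDerivAt (fun y : ℝ => t - y) (-1) y := by
      exact (hasDerivAt_id' y).const_sub t
    have h2 := (hasDerivAt_maxpow k (t - y)).comp y h1
    have h3 := h2.neg.div_const ((k : ℝ) + 2)
    have hk : ((k:ℝ) + 2) ≠ 0 := by positivity
    refine h3.congr_deriv ?_
    rw [div_eq_iff hk]; ring
  rw [intervalIntegral.integral_eq_sub_of_hasDerivAt (fun y _ => hder y)
      (hcont.intervalIntegrable _ _)]

  field_simp
  ring


def slabSet (n : ℕ) (c : Fin n → ℝ) (u : ℝ) : Set (Fin n → ℝ) :=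
  {y | (∀ i, y i ∈ Set.Icc 0 (c i)) ∧ ∑ i, y i ≤ u}

noncomputable def polyaG (n : ℕ) (c : Fin n → ℝ) (u : ℝ) : ℝ :=
  (1 / (n.factorial : ℝ)) * ∑ s : Fin n → Bool,
    (∏ i, (if s i then (1:ℝ) else -1)) *
      (max (u - ∑ i, (if s i then (0:ℝ) else c i)) 0) ^ n

lemma measurableSet_slabSet (n : ℕ) (c : Fin n → ℝ) (u : ℝ) :
    MeasurableSet (slabSet n c u) := by
  have h1 : MeasurableSet (Set.univ.pi fun i => Set.Icc (0:ℝ) (c i)) :=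
    MeasurableSet.univ_pi fun i => measurableSet_Icc
  have h2 : MeasurableSet {y : Fin n → ℝ | ∑ i, y i ≤ u} :=
    measurableSet_le (Finset.measurable_sum _ fun i _ => measurable_pi_apply i) measurable_const
  have : slabSet n c u = (Set.univ.pi fun i => Set.Icc (0:ℝ) (c i)) ∩ {y | ∑ i, y i ≤ u} := by
    ext y
    simp only [slabSet, Set.mem_setOf_eq, Set.mem_inter_iff, Set.mem_pi, Set.mem_univ,
      forall_true_left, Set.mem_Icc]
  rw [this]; exact h1.inter h2

lemma volume_slabSet_lt_top (n : ℕ) (c : Fin n → ℝ) (u : ℝ) :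
    volume (slabSet n c u) < ⊤ := by
  have hsub : slabSet n c u ⊆ Set.univ.pi fun i => Set.Icc 0 (c i) := by
    intro y hy i _; exact hy.1 i
  refine lt_of_le_of_lt (measure_mono hsub) ?_
  rw [volume_pi_pi]
  exact ENNReal.prod_lt_top fun i _ => by simp [Real.volume_Icc]

lemma polyaG_nonneg_of (n : ℕ) (c : Fin n → ℝ) (u : ℝ)
    (h : (volume (slabSet n c u)).toReal = polyaG n c u) : 0 ≤ polyaG n c u :=
  h ▸ ENNReal.toReal_nonneg

lemma polyaG_continuous (n : ℕ) (c : Fin n → ℝ) : Continuous (polyaG n c) := by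
  unfold polyaG
  refine continuous_const.mul (continuous_finset_sum _ fun s _ => continuous_const.mul ?_)
  exact ((continuous_id.sub continuous_const).max continuous_const).pow n

lemma volume_hyperplane (n : ℕ) (hn : 0 < n) (a : ℝ) :
    volume {y : Fin n → ℝ | ∑ i, y i = a} = 0 := by
  classical
  set f : (Fin n → ℝ) →ₗ[ℝ] ℝ := ∑ i, LinearMap.proj i with hf
  have hfy : ∀ y : Fin n → ℝ, f y = ∑ i, y i := by
    intro y; simp [hf, LinearMap.sum_apply]
  set p : Fin n → ℝ := fun _ => a / n with hp
  have hfp : f p = a := by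
    rw [hfy]; simp [hp, Finset.sum_const]
    field_simp
  set S : AffineSubspace ℝ (Fin n → ℝ) := AffineSubspace.mk' p (LinearMap.ker f) with hS
  have hset : {y : Fin n → ℝ | ∑ i, y i = a} = (S : Set (Fin n → ℝ)) := by
    ext y
    simp only [Set.mem_setOf_eq, hS, SetLike.mem_coe, AffineSubspace.mem_mk',
      LinearMap.mem_ker, vsub_eq_sub, map_sub, hfy, hfp]
    rw [show ∑ i, (y - p) i = f (y - p) from (hfy _).symm, map_sub, hfy, hfp, sub_eq_zero]
  rw [hset]
  refine Measure.addHaar_affineSubspace volume S ?_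
  intro htop
  have hdir : S.direction = ⊤ := by rw [htop]; exact AffineSubspace.direction_top ℝ _ _
  rw [hS, AffineSubspace.direction_mk'] at hdir
  have h1 : f (fun _ => (1:ℝ)) = 0 := by
    have : (fun _ => (1:ℝ)) ∈ LinearMap.ker f := hdir ▸ Submodule.mem_top
    exact this
  rw [hfy] at h1
  simp at h1
  omega

lemma slab_rec (n : ℕ) (c : Fin (n+1) → ℝ) (u : ℝ) :
    volume (slabSet (n+1) c u)
      = ∫⁻ y in Set.Icc 0 (c 0), volume (slabSet n (fun j => c j.succ) (u - y)) := by
  classical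
  set e := MeasurableEquiv.piFinSuccAbove (fun _ : Fin (n+1) => ℝ) 0 with he
  have hmp := volume_preserving_piFinSuccAbove (fun _ : Fin (n+1) => ℝ) 0
  set t : Set (ℝ × (Fin n → ℝ)) :=
    {p | p.1 ∈ Set.Icc 0 (c 0) ∧ (∀ j, p.2 j ∈ Set.Icc 0 (c j.succ)) ∧ p.1 + ∑ j, p.2 j ≤ u}
    with ht_def
  have ht : MeasurableSet t := by
    have h1 : MeasurableSet {p : ℝ × (Fin n → ℝ) | p.1 ∈ Set.Icc 0 (c 0)} :=
      measurable_fst measurableSet_Icc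
    have h2 : MeasurableSet {p : ℝ × (Fin n → ℝ) | ∀ j, p.2 j ∈ Set.Icc 0 (c j.succ)} := by
      have hh : {p : ℝ × (Fin n → ℝ) | ∀ j, p.2 j ∈ Set.Icc 0 (c j.succ)}
          = ⋂ j, {p : ℝ × (Fin n → ℝ) | p.2 j ∈ Set.Icc 0 (c j.succ)} := by
        ext p; simp only [Set.mem_setOf_eq, Set.mem_iInter]
      rw [hh]
      exact MeasurableSet.iInter fun j =>
        ((measurable_pi_apply j).comp measurable_snd) measurableSet_Icc
    have h3 : MeasurableSet {p : ℝ × (Fin n → ℝ) | p.1 + ∑ j, p.2 j ≤ u} :=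
      measurableSet_le
        (measurable_fst.add ((Finset.measurable_sum _ fun j _ =>
          (measurable_pi_apply j).comp measurable_snd)))
        measurable_const
    exact h1.inter (h2.inter h3)
  have hpre : slabSet (n+1) c u = e ⁻¹' t := by
    ext x
    have hex : e x = (x 0, fun j => x j.succ) := rfl
    simp only [slabSet, Set.mem_setOf_eq, Set.mem_preimage, hex, ht_def,
      Fin.forall_fin_succ, Fin.sum_univ_succ]
    tauto
  rw [hpre, hmp.measure_preimage ht.nullMeasurableSet, Measure.volume_eq_prod,
    Measure.prod_apply ht,
    ← lintegral_indicator measurableSet_Icc]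
  refine lintegral_congr fun y => ?_
  by_cases hy : y ∈ Set.Icc 0 (c 0)
  · rw [Set.indicator_of_mem hy]
    congr 1
    ext z
    simp only [ht_def, Set.mem_preimage, Set.mem_setOf_eq, slabSet]
    constructor
    · rintro ⟨-, h2, h3⟩; exact ⟨h2, by linarith⟩
    · rintro ⟨h2, h3⟩; exact ⟨hy, h2, by linarith⟩
  · rw [Set.indicator_of_notMem hy]
    have : (Prod.mk y ⁻¹' t) = ∅ := by
      ext z; simp only [ht_def, Set.mem_preimage, Set.mem_setOf_eq, Set.mem_empty_iff_false,
        iff_false]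
      rintro ⟨h1, -⟩; exact hy h1
    rw [this, measure_empty]

lemma volume_slabSet_zero (c : Fin 0 → ℝ) (v : ℝ) :
    volume (slabSet 0 c v) = Set.indicator (Set.Ici (0:ℝ)) 1 v := by
  by_cases hv : 0 ≤ v
  · have h : slabSet 0 c v = Set.univ := by
      ext y; simp [slabSet, hv]
    rw [h, Set.indicator_of_mem (Set.mem_Ici.mpr hv)]
    simp [volume_pi]
  · have h : slabSet 0 c v = ∅ := by
      ext y; simp [slabSet]; linarith [not_le.mp hv]
    rw [h, Set.indicator_of_notMem (by simpa using hv), measure_empty]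

lemma polyaG_one (c : Fin 1 → ℝ) (u : ℝ) :
    polyaG 1 c u = max u 0 - max (u - c 0) 0 := by
  unfold polyaG
  rw [← Equiv.sum_comp (Equiv.funUnique (Fin 1) Bool).symm]
  rw [Fintype.sum_bool]
  simp [Equiv.funUnique]
  ring

lemma slab_base (c : Fin 1 → ℝ) (hc : ∀ i, 0 ≤ c i) (u : ℝ) :
    (volume (slabSet 1 c u)).toReal = polyaG 1 c u := by
  rw [slab_rec 0 c u, polyaG_one]
  have h1 : ∀ y : ℝ, volume (slabSet 0 (fun j => c j.succ) (u - y))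
      = Set.indicator (Set.Iic u) 1 y := by
    intro y
    rw [volume_slabSet_zero]
    by_cases hy : y ≤ u
    · rw [Set.indicator_of_mem (Set.mem_Ici.mpr (by linarith)),
        Set.indicator_of_mem (Set.mem_Iic.mpr hy)]
      rfl
    · rw [Set.indicator_of_notMem (by simp; linarith [not_le.mp hy]),
        Set.indicator_of_notMem (by simpa using hy)]
  simp only [h1]
  rw [lintegral_indicator measurableSet_Iic, Measure.restrict_restrict measurableSet_Iic,
    Pi.one_def, lintegral_one, Measure.restrict_apply MeasurableSet.univ, Set.univ_inter]
  have hIcc : Set.Iic u ∩ Set.Icc 0 (c 0) = Set.Icc 0 (min (c 0) u) := by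
    ext z
    simp only [Set.mem_inter_iff, Set.mem_Iic, Set.mem_Icc, le_min_iff]
    tauto
  rw [hIcc, Real.volume_Icc]
  have h2 : (ENNReal.ofReal (min (c 0) u - 0)).toReal = max (min (c 0) u) 0 := by
    rw [sub_zero]
    rcases le_total (min (c 0) u) 0 with h | h
    · rw [ENNReal.ofReal_eq_zero.mpr h, max_eq_right h]; simp
    · rw [ENNReal.toReal_ofReal h, max_eq_left h]
  rw [h2]
  have hc0 := hc 0
  rcases le_total u 0 with h | h <;> rcases le_total u (c 0) with h3 | h3 <;>
    simp [min_def, max_def] <;> split_ifs <;> linarith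

lemma slab_toReal (n : ℕ) (hn : 1 ≤ n) (c : Fin n → ℝ) (hc : ∀ i, 0 ≤ c i) (u : ℝ) :
    (volume (slabSet n c u)).toReal = polyaG n c u := by
  induction n, hn using Nat.le_induction generalizing u with
  | base => exact slab_base c hc u
  | succ n hn ih =>
    obtain ⟨k, rfl⟩ : ∃ k, n = k + 1 := ⟨n - 1, by omega⟩
    set c' : Fin (k+1) → ℝ := fun j => c j.succ with hc'def
    have hc' : ∀ j, 0 ≤ c' j := fun j => hc _
    set d : (Fin (k+1) → Bool) → ℝ := fun s => ∑ i, if s i then (0:ℝ) else c' i with hd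
    rw [slab_rec]
    have hvol : ∀ y : ℝ, volume (slabSet (k+1) c' (u - y))
        = ENNReal.ofReal (polyaG (k+1) c' (u - y)) := fun y => by
      rw [← ih c' hc' (u - y), ENNReal.ofReal_toReal (volume_slabSet_lt_top _ _ _).ne]
    simp only [← hc'def, hvol]
    have hgc : Continuous fun y : ℝ => polyaG (k+1) c' (u - y) :=
      (polyaG_continuous _ c').comp (continuous_const.sub continuous_id)
    have hgnn : ∀ y, 0 ≤ polyaG (k+1) c' (u - y) :=
      fun y => polyaG_nonneg_of _ _ _ (ih c' hc' (u - y))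
    rw [← ofReal_integral_eq_lintegral_ofReal hgc.integrableOn_Icc
      (Filter.Eventually.of_forall hgnn),
      ENNReal.toReal_ofReal (setIntegral_nonneg measurableSet_Icc fun y _ => hgnn y),
      MeasureTheory.integral_Icc_eq_integral_Ioc, ← intervalIntegral.integral_of_le (hc 0)]
    have hrw : ∀ y : ℝ, polyaG (k+1) c' (u - y)
        = ∑ s : Fin (k+1) → Bool, (((k+1).factorial : ℝ))⁻¹ *
            ((∏ i, (if s i then (1:ℝ) else -1)) * (max ((u - d s) - y) 0) ^ (k+1)) := by
      intro y
      unfold polyaG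
      rw [one_div, Finset.mul_sum]
      refine Finset.sum_congr rfl fun s _ => ?_
      rw [sub_right_comm]
    simp only [hrw]
    rw [intervalIntegral.integral_finset_sum]
    swap
    · intro s _
      exact (Continuous.intervalIntegrable (by
        exact continuous_const.mul (continuous_const.mul
          (((continuous_const.sub continuous_id).max continuous_const).pow _))) _ _)
    have hterm : ∀ s : Fin (k+1) → Bool,
        (∫ y in (0:ℝ)..(c 0), (((k+1).factorial : ℝ))⁻¹ *
          ((∏ i, (if s i then (1:ℝ) else -1)) * (max ((u - d s) - y) 0) ^ (k+1)))
        = (((k+1).factorial : ℝ))⁻¹ * ((∏ i, (if s i then (1:ℝ) else -1)) *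
            (((max (u - d s) 0) ^ (k+2) - (max (u - d s - c 0) 0) ^ (k+2)) / (k+2))) := by
      intro s
      rw [intervalIntegral.integral_const_mul, intervalIntegral.integral_const_mul,
        integral_maxpow]
    simp only [hterm]
    -- now the algebra
    have hProd : ∀ (b : Bool) (s : Fin (k+1) → Bool),
        (∏ i : Fin (k+2), if (Fin.cons b s : Fin (k+2) → Bool) i then (1:ℝ) else -1)
          = (if b then (1:ℝ) else -1) * ∏ i, (if s i then (1:ℝ) else -1) := by
      intro b s
      rw [Fin.prod_univ_succ, Fin.cons_zero]
      simp only [Fin.cons_succ]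
    have hSum : ∀ (b : Bool) (s : Fin (k+1) → Bool),
        (∑ i : Fin (k+2), if (Fin.cons b s : Fin (k+2) → Bool) i then (0:ℝ) else c i)
          = (if b then (0:ℝ) else c 0) + d s := by
      intro b s
      rw [Fin.sum_univ_succ, Fin.cons_zero, hd]
      simp only [Fin.cons_succ, hc'def]
    unfold polyaG
    rw [← Equiv.sum_comp (Fin.consEquiv (fun _ : Fin (k+2) => Bool))]
    rw [Fintype.sum_prod_type, Fintype.sum_bool]
    simp only [Fin.consEquiv_apply, hProd, hSum, Bool.false_eq_true, if_true, if_false]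
    rw [← Finset.sum_add_distrib, one_div, Finset.mul_sum]
    refine Finset.sum_congr rfl fun s _ => ?_
    have h1 : u - ((0:ℝ) + d s) = u - d s := by ring
    have h2 : u - (c 0 + d s) = u - d s - c 0 := by ring
    rw [h1, h2]
    have hfac : ((k+1+1).factorial : ℝ) = ((k+1).factorial : ℝ) * (k+2) := by
      rw [Nat.factorial_succ]; push_cast; ring
    rw [hfac]
    have hne1 : (((k+1).factorial : ℝ)) ≠ 0 := by positivity
    have hne2 : ((k:ℝ)+2) ≠ 0 := by positivity
    field_simp
    ring

/-- Pólya's formula for the volume of the polytope `P_{w,θ}^n` given by `|xᵢ| ≤ wᵢ` and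
`|∑ xᵢ| ≤ θ`: with `v = (w₁,…,wₙ,θ)`, `vol_n(P_{w,θ}^n) = (1/n!) ∑_{s ∈ V_{n+1}} ε_s (v·s)₊^n`. -/
theorem volume_polya_polytope
    (n : ℕ) (hn : 0 < n) (w : Fin n → ℝ) (hw : ∀ i, 0 < w i) (θ : ℝ) (hθ : 0 < θ) :
    (volume {x : Fin n → ℝ | (∀ i, |x i| ≤ w i) ∧ |∑ i, x i| ≤ θ}).toReal =
      (1 / (n.factorial : ℝ)) *
        ∑ s : Fin (n + 1) → Bool,
          (∏ i, (if s i then (1 : ℝ) else -1)) *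
            (max (∑ i, (Fin.snoc w θ : Fin (n + 1) → ℝ) i * (if s i then (1 : ℝ) else -1))
              0) ^ n := by
  classical
  set W : ℝ := ∑ i, w i with hW
  set c : Fin n → ℝ := fun i => 2 * w i with hcdef
  have hc : ∀ i, 0 ≤ c i := fun i => by have := hw i; simp [hcdef]; linarith
  set T : Set (Fin n → ℝ) :=
    {y | (∀ i, y i ∈ Set.Icc 0 (c i)) ∧ ∑ i, y i ∈ Set.Icc (W - θ) (W + θ)} with hT
  -- step 1: translation
  have hset : {x : Fin n → ℝ | (∀ i, |x i| ≤ w i) ∧ |∑ i, x i| ≤ θ}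
      = (fun x : Fin n → ℝ => x + w) ⁻¹' T := by
    ext x
    simp only [Set.mem_setOf_eq, Set.mem_preimage, hT, Pi.add_apply, Set.mem_Icc,
      abs_le, hcdef, Finset.sum_add_distrib, ← hW]
    constructor
    · rintro ⟨h1, h2, h3⟩
      exact ⟨fun i => ⟨by linarith [(h1 i).1], by linarith [(h1 i).2]⟩,
        by linarith, by linarith⟩
    · rintro ⟨h1, h2, h3⟩
      exact ⟨fun i => ⟨by linarith [(h1 i).1], by linarith [(h1 i).2]⟩,
        by linarith, by linarith⟩
  rw [hset, measure_preimage_add_right]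
  -- step 2: T as a difference
  set B : Set (Fin n → ℝ) :=
    {y | (∀ i, y i ∈ Set.Icc 0 (c i)) ∧ ∑ i, y i < W - θ} with hB
  have hBmeas : MeasurableSet B := by
    have h1 : MeasurableSet (Set.univ.pi fun i => Set.Icc (0:ℝ) (c i)) :=
      MeasurableSet.univ_pi fun i => measurableSet_Icc
    have h2 : MeasurableSet {y : Fin n → ℝ | ∑ i, y i < W - θ} :=
      measurableSet_lt (Finset.measurable_sum _ fun i _ => measurable_pi_apply i)
        measurable_const
    have : B = (Set.univ.pi fun i => Set.Icc (0:ℝ) (c i)) ∩ {y | ∑ i, y i < W - θ} := by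
      ext y
      simp only [hB, Set.mem_setOf_eq, Set.mem_inter_iff, Set.mem_pi, Set.mem_univ,
        forall_true_left]
    rw [this]; exact h1.inter h2
  have hBsub : B ⊆ slabSet n c (W + θ) := by
    rintro y ⟨h1, h2⟩; exact ⟨h1, by linarith⟩
  have hTd : T = slabSet n c (W + θ) \ B := by
    ext y
    simp only [hT, hB, Set.mem_setOf_eq, Set.mem_diff, slabSet, Set.mem_Icc]
    constructor
    · rintro ⟨h1, h2, h3⟩
      exact ⟨⟨h1, h3⟩, fun h => absurd h.2 (not_lt.mpr h2)⟩
    · rintro ⟨⟨h1, h2⟩, h3⟩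
      refine ⟨h1, ?_, h2⟩
      by_contra hcon
      exact h3 ⟨h1, by linarith [not_le.mp hcon]⟩
  have hBfin : volume B ≠ ⊤ :=
    ((measure_mono hBsub).trans_lt (volume_slabSet_lt_top n c (W + θ))).ne
  rw [hTd, measure_diff hBsub hBmeas.nullMeasurableSet hBfin]
  -- step 3: volume B = volume slab (W - θ)
  have hvolB : volume B = volume (slabSet n c (W - θ)) := by
    refine le_antisymm (measure_mono ?_) ?_
    · rintro y ⟨h1, h2⟩; exact ⟨h1, h2.le⟩
    have hsub2 : slabSet n c (W - θ) ⊆ B ∪ {y : Fin n → ℝ | ∑ i, y i = W - θ} := by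
      rintro y ⟨h1, h2⟩
      rcases lt_or_eq_of_le h2 with h | h
      · exact Or.inl ⟨h1, h⟩
      · exact Or.inr h
    calc volume (slabSet n c (W - θ)) ≤ volume (B ∪ {y : Fin n → ℝ | ∑ i, y i = W - θ}) :=
          measure_mono hsub2
      _ ≤ volume B + volume {y : Fin n → ℝ | ∑ i, y i = W - θ} := measure_union_le _ _
      _ = volume B := by rw [volume_hyperplane n hn, add_zero]
  have hmono : slabSet n c (W - θ) ⊆ slabSet n c (W + θ) := by
    rintro y ⟨h1, h2⟩; exact ⟨h1, by linarith⟩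
  rw [hvolB, ENNReal.toReal_sub_of_le (measure_mono hmono)
    (volume_slabSet_lt_top n c (W + θ)).ne]
  rw [slab_toReal n hn c hc (W + θ), slab_toReal n hn c hc (W - θ)]
  -- step 4: algebra
  have hdot : ∀ s : Fin n → Bool,
      W - ∑ i, (if s i then (0:ℝ) else c i) = ∑ i, w i * (if s i then (1:ℝ) else -1) := by
    intro s
    rw [hW, ← Finset.sum_sub_distrib]
    refine Finset.sum_congr rfl fun i _ => ?_
    by_cases h : s i <;> simp [h, hcdef] <;> try ring
  have hProd : ∀ (b : Bool) (s : Fin n → Bool),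
      (∏ i : Fin (n+1), if (Fin.snoc s b : Fin (n+1) → Bool) i then (1:ℝ) else -1)
        = (∏ i, (if s i then (1:ℝ) else -1)) * (if b then (1:ℝ) else -1) := by
    intro b s
    rw [Fin.prod_univ_castSucc, Fin.snoc_last]
    simp only [Fin.snoc_castSucc]
  have hSum : ∀ (b : Bool) (s : Fin n → Bool),
      (∑ i : Fin (n+1), (Fin.snoc w θ : Fin (n+1) → ℝ) i *
          (if (Fin.snoc s b : Fin (n+1) → Bool) i then (1:ℝ) else -1))
        = (∑ i, w i * (if s i then (1:ℝ) else -1)) + θ * (if b then (1:ℝ) else -1) := by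
    intro b s
    rw [Fin.sum_univ_castSucc]
    simp only [Fin.snoc_castSucc, Fin.snoc_last]
  rw [← Equiv.sum_comp (Fin.snocEquiv (fun _ : Fin (n+1) => Bool))]
  rw [Fintype.sum_prod_type, Fintype.sum_bool]
  simp only [Fin.snocEquiv_apply, hProd, hSum, Bool.false_eq_true, if_true, if_false]
  unfold polyaG
  rw [← mul_sub, ← Finset.sum_sub_distrib, ← Finset.sum_add_distrib, mul_one]
  congr 1
  refine Finset.sum_congr rfl fun s _ => ?_
  have hA : W + θ - ∑ i, (if s i then (0:ℝ) else c i)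
      = (∑ i, w i * (if s i then (1:ℝ) else -1)) + θ := by
    have := hdot s; linarith
  have hB2 : W - θ - ∑ i, (if s i then (0:ℝ) else c i)
      = (∑ i, w i * (if s i then (1:ℝ) else -1)) + θ * (-1) := by
    have := hdot s; linarith
  rw [hA, hB2]
  ring
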